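/- Randomized Kaczmarz for ridge regression (coordinate descent on the dual) with n > m converges linearly: E‖α_t − α°‖²_{XX*+λI} ≤ (1 − (σ_1² + λ)/(Σ_i σ_i² + mλ))^t ‖α_0 − α°‖²_{XX*+λI}, where σ_1 is the smallest singular value of X. -/

import Mathlib

open Matrix

lemma rk_step_quad {m : ℕ} (A : Matrix (Fin m) (Fin m) ℝ) (hA : Aᵀ = A)
    (e : Fin m → ℝ) (i : Fin m) (hAii : A i i ≠ 0) :
    (e - ((A *ᵥ e) i / A i i) • (Pi.single i 1 : Fin m → ℝ)) ⬝ᵥ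
        A *ᵥ (e - ((A *ᵥ e) i / A i i) • (Pi.single i 1 : Fin m → ℝ)) =
      e ⬝ᵥ A *ᵥ e - ((A *ᵥ e) i) ^ 2 / A i i := by
  have key : ∀ w, e ⬝ᵥ A *ᵥ w = (A *ᵥ e) ⬝ᵥ w := by
    intro w
    conv_lhs => rw [dotProduct_mulVec, ← hA, vecMul_transpose]
  set c := (A *ᵥ e) i / A i i with hc
  rw [mulVec_sub, mulVec_smul, dotProduct_sub, sub_dotProduct, sub_dotProduct,
    dotProduct_smul, smul_dotProduct, smul_dotProduct, dotProduct_smul,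
    key, key, mulVec_single]
  simp only [smul_eq_mul, single_dotProduct, one_mul, dotProduct_single, mul_one,
    MulOpposite.op_one, one_smul, col_apply]
  rw [hc]
  field_simp
  ring

lemma rk_spec_bound {m : ℕ} (A : Matrix (Fin m) (Fin m) ℝ) {c : ℝ} (hc : 0 ≤ c)
    (hB : (A - c • (1 : Matrix (Fin m) (Fin m) ℝ)).PosSemidef) (e : Fin m → ℝ) :
    c * (e ⬝ᵥ A *ᵥ e) ≤ (A *ᵥ e) ⬝ᵥ (A *ᵥ e) := by
  have h1 := hB.dotProduct_mulVec_nonneg e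
  rw [star_trivial, sub_mulVec, smul_mulVec, one_mulVec, dotProduct_sub,
    dotProduct_smul] at h1
  have h2 : (0:ℝ) ≤ (A *ᵥ e - c • e) ⬝ᵥ (A *ᵥ e - c • e) := by
    refine Finset.sum_nonneg fun j _ => mul_self_nonneg _
  rw [dotProduct_sub, sub_dotProduct, sub_dotProduct, dotProduct_smul,
    smul_dotProduct, smul_dotProduct, dotProduct_smul] at h2
  have h3 : e ⬝ᵥ (A *ᵥ e) = (A *ᵥ e) ⬝ᵥ e := dotProduct_comm _ _
  simp only [smul_eq_mul] at h1 h2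
  nlinarith [mul_nonneg hc h1]

lemma rk_psd_of_spectrum_lb {m : ℕ} (M : Matrix (Fin m) (Fin m) ℝ) (hM : M.IsHermitian)
    {r : ℝ} (hlb : ∀ s ∈ spectrum ℝ M, r ≤ s) :
    (M - r • (1 : Matrix (Fin m) (Fin m) ℝ)).PosSemidef := by
  have hB : (M - r • (1 : Matrix (Fin m) (Fin m) ℝ)).IsHermitian := by
    refine hM.sub ?_
    unfold Matrix.IsHermitian
    rw [conjTranspose_smul, conjTranspose_one, star_trivial]
  refine hB.posSemidef_iff_eigenvalues_nonneg.mpr fun i => ?_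
  show 0 ≤ hB.eigenvalues i
  have hmem := hB.eigenvalues_mem_spectrum_real i
  have heq : M - r • (1 : Matrix (Fin m) (Fin m) ℝ)
      = M - algebraMap ℝ (Matrix (Fin m) (Fin m) ℝ) r := by
    rw [Algebra.algebraMap_eq_smul_one]
  obtain ⟨μ, hμmem, hμ⟩ : ∃ μ, μ ∈ spectrum ℝ (M - r • (1 : Matrix (Fin m) (Fin m) ℝ)) ∧
      μ = hB.eigenvalues i := ⟨_, hmem, rfl⟩
  rw [← hμ]
  rw [heq, ← spectrum.sub_singleton_eq] at hμmem
  obtain ⟨x, hx, y, hy, hxy⟩ := Set.mem_sub.mp hμmem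
  rw [Set.mem_singleton_iff] at hy
  subst hy
  have := hlb x hx
  linarith [hxy, this]

/-- One step of randomized Kaczmarz (dual coordinate descent) for ridge regression:
update coordinate i of the dual variable α. -/
noncomputable def rkUpdate {m n : ℕ} (X : Matrix (Fin m) (Fin n) ℝ) (y : Fin m → ℝ)
    (lam : ℝ) (i : Fin m) (α : Fin m → ℝ) : Fin m → ℝ :=
  Function.update α i
    (α i + (y i - ((X * Xᵀ).mulVec α) i - lam * α i) / ((∑ j, (X i j) ^ 2) + lam))

/-- Iterate RK along a given sequence of row choices. -/
noncomputable def rkIter {m n : ℕ} (X : Matrix (Fin m) (Fin n) ℝ) (y : Fin m → ℝ)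
    (lam : ℝ) : List (Fin m) → (Fin m → ℝ) → Fin m → ℝ
  | [], α => α
  | i :: is, α => rkIter X y lam is (rkUpdate X y lam i α)

lemma rk_diag {m n : ℕ} (X : Matrix (Fin m) (Fin n) ℝ) (lam : ℝ) (i : Fin m) :
    (X * Xᵀ + lam • (1 : Matrix (Fin m) (Fin m) ℝ)) i i = (∑ j, (X i j) ^ 2) + lam := by
  simp [Matrix.add_apply, Matrix.mul_apply, Matrix.one_apply, Matrix.smul_apply, sq]

lemma rk_update_sub {m n : ℕ} (X : Matrix (Fin m) (Fin n) ℝ) (y : Fin m → ℝ)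
    (lam : ℝ) (i : Fin m) (α αo : Fin m → ℝ)
    (hαo : (X * Xᵀ + lam • (1 : Matrix (Fin m) (Fin m) ℝ)) *ᵥ αo = y) :
    rkUpdate X y lam i α - αo =
      (α - αo) -
        (((X * Xᵀ + lam • (1 : Matrix (Fin m) (Fin m) ℝ)) *ᵥ (α - αo)) i /
            ((X * Xᵀ + lam • (1 : Matrix (Fin m) (Fin m) ℝ)) i i)) •
          (Pi.single i 1 : Fin m → ℝ) := by
  set A := X * Xᵀ + lam • (1 : Matrix (Fin m) (Fin m) ℝ) with hAdef
  have hnum : (A *ᵥ (α - αo)) i = ((X * Xᵀ) *ᵥ α) i + lam * α i - y i := by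
    rw [mulVec_sub, hαo, Pi.sub_apply, hAdef, add_mulVec, smul_mulVec, one_mulVec]
    simp
  funext j
  by_cases hj : j = i
  · subst hj
    have hd : A j j = (∑ k, (X j k) ^ 2) + lam := by rw [hAdef]; exact rk_diag X lam j
    simp only [rkUpdate, Pi.sub_apply, Pi.smul_apply, Function.update_self,
      Pi.single_eq_same, smul_eq_mul, mul_one, hnum, hd]
    ring
  · simp [rkUpdate, Function.update_of_ne hj, Pi.single_eq_of_ne hj]

/-- Randomized Kaczmarz for ridge regression with n > m converges linearly:
E‖α_t − α°‖²_{XXᵀ+λI} ≤ (1 − (σ₁² + λ)/(Σᵢ σᵢ² + mλ))ᵗ ‖α₀ − α°‖²_{XXᵀ+λI},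
where rows are chosen with probability (‖Xⁱ‖² + λ)/(‖X‖_F² + mλ) and σ₁ is the
smallest singular value of X (Σᵢ σᵢ² = ‖X‖_F²). -/
theorem rk_ridge_linear_convergence {m n : ℕ} (hmn : m < n)
    (X : Matrix (Fin m) (Fin n) ℝ) (y : Fin m → ℝ) (lam : ℝ) (hlam : 0 < lam)
    (σ1 : ℝ) (hσ1 : 0 ≤ σ1) (hσ : IsLeast (spectrum ℝ (X * Xᵀ)) (σ1 ^ 2))
    (αo : Fin m → ℝ)
    (hαo : (X * Xᵀ + lam • (1 : Matrix (Fin m) (Fin m) ℝ)).mulVec αo = y)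
    (α0 : Fin m → ℝ) (t : ℕ) :
    ∑ is : Fin t → Fin m,
        (∏ s, (((∑ j, (X (is s) j) ^ 2) + lam) / ((∑ i, ∑ j, (X i j) ^ 2) + m * lam))) *
          ((rkIter X y lam (List.ofFn is) α0 - αo) ⬝ᵥ
            (X * Xᵀ + lam • (1 : Matrix (Fin m) (Fin m) ℝ)).mulVec
              (rkIter X y lam (List.ofFn is) α0 - αo)) ≤
      (1 - (σ1 ^ 2 + lam) / ((∑ i, ∑ j, (X i j) ^ 2) + m * lam)) ^ t *
        ((α0 - αo) ⬝ᵥ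
          (X * Xᵀ + lam • (1 : Matrix (Fin m) (Fin m) ℝ)).mulVec (α0 - αo)) := by
  rcases Nat.eq_zero_or_pos m with hm | hm
  · subst hm
    simp [dotProduct]
  set A := X * Xᵀ + lam • (1 : Matrix (Fin m) (Fin m) ℝ) with hAdef
  set T : ℝ := (∑ i, ∑ j, (X i j) ^ 2) + m * lam with hTdef
  set c : ℝ := σ1 ^ 2 + lam with hcdef
  have hd : ∀ i, A i i = (∑ j, (X i j) ^ 2) + lam := fun i => by
    rw [hAdef]; exact rk_diag X lam i
  have hdpos : ∀ i, 0 < A i i := fun i => by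
    rw [hd i]
    have : (0:ℝ) ≤ ∑ j, (X i j) ^ 2 := Finset.sum_nonneg fun j _ => sq_nonneg _
    linarith
  have hTsum : ∑ i, A i i = T := by
    rw [hTdef]
    simp only [hd]
    rw [Finset.sum_add_distrib, Finset.sum_const, Finset.card_univ, Fintype.card_fin,
      nsmul_eq_mul]
  have hTpos : 0 < T := by
    rw [← hTsum]
    exact Finset.sum_pos (fun i _ => hdpos i) ⟨⟨0, hm⟩, Finset.mem_univ _⟩
  have hAsym : Aᵀ = A := by
    rw [hAdef, transpose_add, transpose_smul, transpose_one, transpose_mul,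
      transpose_transpose]
  have hcpos : 0 < c := by rw [hcdef]; positivity
  have hherm : (X * Xᵀ).IsHermitian := by
    have h := isHermitian_mul_conjTranspose_self X
    rwa [conjTranspose_eq_transpose_of_trivial] at h
  have hBpsd : (A - c • (1 : Matrix (Fin m) (Fin m) ℝ)).PosSemidef := by
    have h1 : A - c • (1 : Matrix (Fin m) (Fin m) ℝ)
        = X * Xᵀ - σ1 ^ 2 • (1 : Matrix (Fin m) (Fin m) ℝ) := by
      rw [hAdef, hcdef, add_smul]; abel
    rw [h1]
    exact rk_psd_of_spectrum_lb _ hherm fun s hs => hσ.2 hs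
  have hqnonneg : ∀ z : Fin m → ℝ, 0 ≤ z ⬝ᵥ A *ᵥ z := by
    intro z
    have h1 := hBpsd.dotProduct_mulVec_nonneg z
    rw [star_trivial, sub_mulVec, smul_mulVec, one_mulVec, dotProduct_sub,
      dotProduct_smul] at h1
    have h2 : (0:ℝ) ≤ z ⬝ᵥ z := Finset.sum_nonneg fun j _ => mul_self_nonneg _
    have h3 := mul_nonneg hcpos.le h2
    simp only [smul_eq_mul] at h1
    linarith
  have step : ∀ α : Fin m → ℝ,
      ∑ i, (A i i / T) * ((rkUpdate X y lam i α - αo) ⬝ᵥ A *ᵥ (rkUpdate X y lam i α - αo))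
        ≤ (1 - c / T) * ((α - αo) ⬝ᵥ A *ᵥ (α - αo)) := by
    intro α
    have hαo' : (X * Xᵀ + lam • (1 : Matrix (Fin m) (Fin m) ℝ)) *ᵥ αo = y := by
      rw [← hAdef]; exact hαo
    have hupd : ∀ i, rkUpdate X y lam i α - αo
        = (α - αo) - ((A *ᵥ (α - αo)) i / A i i) • (Pi.single i 1 : Fin m → ℝ) := by
      intro i
      have h := rk_update_sub X y lam i α αo hαo'
      rw [← hAdef] at h
      exact h
    have hterm : ∀ i,
        (A i i / T) * ((rkUpdate X y lam i α - αo) ⬝ᵥ A *ᵥ (rkUpdate X y lam i α - αo))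
          = (A i i / T) * ((α - αo) ⬝ᵥ A *ᵥ (α - αo)) - ((A *ᵥ (α - αo)) i) ^ 2 / T := by
      intro i
      have hne : A i i ≠ 0 := (hdpos i).ne'
      have hTne : T ≠ 0 := hTpos.ne'
      rw [hupd i, rk_step_quad A hAsym _ i hne]
      field_simp
    have hdot : (A *ᵥ (α - αo)) ⬝ᵥ (A *ᵥ (α - αo)) = ∑ i, ((A *ᵥ (α - αo)) i) ^ 2 := by
      simp [dotProduct, sq]
    have hsum : ∑ i, (A i i / T) *
          ((rkUpdate X y lam i α - αo) ⬝ᵥ A *ᵥ (rkUpdate X y lam i α - αo))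
        = ((α - αo) ⬝ᵥ A *ᵥ (α - αo))
            - ((A *ᵥ (α - αo)) ⬝ᵥ (A *ᵥ (α - αo))) / T := by
      rw [Finset.sum_congr rfl fun i _ => hterm i, Finset.sum_sub_distrib, ← Finset.sum_div,
        ← hdot, ← Finset.sum_mul, ← Finset.sum_div, hTsum, div_self hTpos.ne', one_mul]
    rw [hsum]
    have hspec := rk_spec_bound A hcpos.le hBpsd (α - αo)
    have hdiv : c * ((α - αo) ⬝ᵥ A *ᵥ (α - αo)) / T
        ≤ ((A *ᵥ (α - αo)) ⬝ᵥ (A *ᵥ (α - αo))) / T :=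
      div_le_div_of_nonneg_right hspec hTpos.le
    have hid : (1 - c / T) * ((α - αo) ⬝ᵥ A *ᵥ (α - αo))
        = ((α - αo) ⬝ᵥ A *ᵥ (α - αo)) - c * ((α - αo) ⬝ᵥ A *ᵥ (α - αo)) / T := by ring
    linarith
  have hρ : 0 ≤ 1 - c / T := by
    set i0 : Fin m := ⟨0, hm⟩
    have h1 := step (αo + Pi.single i0 1)
    have h2 : (αo + Pi.single i0 1) - αo = (Pi.single i0 1 : Fin m → ℝ) := by
      funext j; simp
    rw [h2] at h1
    have h3 : (Pi.single i0 1 : Fin m → ℝ) ⬝ᵥ A *ᵥ (Pi.single i0 1 : Fin m → ℝ)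
        = A i0 i0 := by
      rw [mulVec_single, single_dotProduct]
      simp
    rw [h3] at h1
    have h4 : 0 ≤ ∑ i, (A i i / T) * ((rkUpdate X y lam i (αo + Pi.single i0 1) - αo) ⬝ᵥ
        A *ᵥ (rkUpdate X y lam i (αo + Pi.single i0 1) - αo)) :=
      Finset.sum_nonneg fun i _ =>
        mul_nonneg (div_nonneg (hdpos i).le hTpos.le) (hqnonneg _)
    by_contra hcon
    push_neg at hcon
    nlinarith [hdpos i0]
  induction t generalizing α0 with
  | zero =>
    simp [rkIter]
  | succ t ih =>
    have hofn : ∀ (i : Fin m) (rest : Fin t → Fin m),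
        List.ofFn (Fin.cons i rest : Fin (t+1) → Fin m) = i :: List.ofFn rest := by
      intro i rest
      rw [List.ofFn_succ]
      simp
    rw [← Equiv.sum_comp (Fin.consEquiv fun _ : Fin (t+1) => Fin m), Fintype.sum_prod_type]
    have hsummand : ∀ (i : Fin m) (rest : Fin t → Fin m),
        (∏ s, (((∑ j, (X ((Fin.consEquiv fun _ : Fin (t+1) => Fin m) (i, rest) s) j) ^ 2)
            + lam) / T)) *
          ((rkIter X y lam (List.ofFn ((Fin.consEquiv fun _ : Fin (t+1) => Fin m) (i, rest)))
              α0 - αo) ⬝ᵥ A *ᵥ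
            (rkIter X y lam (List.ofFn ((Fin.consEquiv fun _ : Fin (t+1) => Fin m) (i, rest)))
              α0 - αo))
        = (A i i / T) * ((∏ s, (((∑ j, (X (rest s) j) ^ 2) + lam) / T)) *
            ((rkIter X y lam (List.ofFn rest) (rkUpdate X y lam i α0) - αo) ⬝ᵥ A *ᵥ
              (rkIter X y lam (List.ofFn rest) (rkUpdate X y lam i α0) - αo))) := by
      intro i rest
      have hce : (Fin.consEquiv fun _ : Fin (t+1) => Fin m) (i, rest)
          = (Fin.cons i rest : Fin (t+1) → Fin m) := rfl
      rw [hce, hofn, Fin.prod_univ_succ]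
      simp only [Fin.cons_zero, Fin.cons_succ, rkIter, hd]
      ring
    rw [Finset.sum_congr rfl fun i _ => Finset.sum_congr rfl fun rest _ => hsummand i rest]
    calc ∑ i, ∑ rest : Fin t → Fin m,
          (A i i / T) * ((∏ s, (((∑ j, (X (rest s) j) ^ 2) + lam) / T)) *
            ((rkIter X y lam (List.ofFn rest) (rkUpdate X y lam i α0) - αo) ⬝ᵥ A *ᵥ
              (rkIter X y lam (List.ofFn rest) (rkUpdate X y lam i α0) - αo)))
        = ∑ i, (A i i / T) * (∑ rest : Fin t → Fin m,
            (∏ s, (((∑ j, (X (rest s) j) ^ 2) + lam) / T)) *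
              ((rkIter X y lam (List.ofFn rest) (rkUpdate X y lam i α0) - αo) ⬝ᵥ A *ᵥ
                (rkIter X y lam (List.ofFn rest) (rkUpdate X y lam i α0) - αo))) := by
          refine Finset.sum_congr rfl fun i _ => ?_
          rw [Finset.mul_sum]
      _ ≤ ∑ i, (A i i / T) * ((1 - c / T) ^ t *
            ((rkUpdate X y lam i α0 - αo) ⬝ᵥ A *ᵥ (rkUpdate X y lam i α0 - αo))) := by
          refine Finset.sum_le_sum fun i _ => ?_
          exact mul_le_mul_of_nonneg_left (ih (rkUpdate X y lam i α0))
            (div_nonneg (hdpos i).le hTpos.le)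
      _ = (1 - c / T) ^ t * ∑ i, (A i i / T) *
            ((rkUpdate X y lam i α0 - αo) ⬝ᵥ A *ᵥ (rkUpdate X y lam i α0 - αo)) := by
          rw [Finset.mul_sum]
          exact Finset.sum_congr rfl fun i _ => by ring
      _ ≤ (1 - c / T) ^ t * ((1 - c / T) * ((α0 - αo) ⬝ᵥ A *ᵥ (α0 - αo))) :=
          mul_le_mul_of_nonneg_left (step α0) (pow_nonneg hρ t)
      _ = (1 - c / T) ^ (t + 1) * ((α0 - αo) ⬝ᵥ A *ᵥ (α0 - αo)) := by ring
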